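/- Let Z → X ← U be maps in a topos E, and suppose X is the colimit of a small diagram F : K → E. Then j : U → X is a complement of i : Z → X if and only if for every p in K, the base change of j along F(p) → X is a complement of the base change of i along F(p) → X. -/

import Mathlib

open CategoryTheory Limits Opposite

universe v u

/-- Maps `i : Z ⟶ X` and `j : U ⟶ X` are *disjoint* if every commutative square
over them has initial top-left vertex. -/
def AreDisjoint {C : Type u} [Category.{v} C] {Z X U : C} (i : Z ⟶ X) (j : U ⟶ X) : Prop :=
  ∀ (A : C) (a : A ⟶ Z) (b : A ⟶ U), a ≫ i = b ≫ j → Nonempty (IsInitial A)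

/-- `j` is a complement of `i`. -/
def IsComplementOf {C : Type u} [Category.{v} C] {Z X U : C} (i : Z ⟶ X) (j : U ⟶ X) : Prop :=
  Mono j ∧ AreDisjoint i j ∧
    ∀ (V : C) (v : V ⟶ X), AreDisjoint i v → ∃ k : V ⟶ U, k ≫ j = v

namespace ComplementAux

variable {C : Type v} [SmallCategory C] (J : GrothendieckTopology C)

lemma bot_pullback {c d : C} (f : d ⟶ c) : (⊥ : Sieve c).pullback f = ⊥ := by
  ext g
  exact ⟨fun h => (h : False).elim, fun h => (h : False).elim⟩

/-- The sheaf whose sections over `c` are proofs that the empty sieve covers `c`. -/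
def botTest : Sheaf J (Type v) where
  obj :=
    { obj := fun c => ULift.{v} (PLift ((⊥ : Sieve c.unop) ∈ J c.unop))
      map := fun f => TypeCat.ofHom fun x => ⟨⟨by
        simpa [bot_pullback] using J.pullback_stable f.unop x.down.down⟩⟩ }
  property := by
    rw [isSheaf_iff_isSheaf_of_type]
    intro c S hS x hx
    refine ⟨⟨⟨J.transitive hS ⊥ fun Y f hf => ?_⟩⟩, fun _ _ _ => Subsingleton.elim _ _,
      fun _ _ => Subsingleton.elim _ _⟩
    rw [bot_pullback]
    exact (x f hf).down.down

/-- A sheaf is "locally empty" if all its sections witness that the empty sieve covers. -/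
def LocEmpty (A : Sheaf J (Type v)) : Prop :=
  ∀ (c : Cᵒᵖ), A.val.obj c → (⊥ : Sieve c.unop) ∈ J c.unop

lemma locEmpty_of_isInitial {A : Sheaf J (Type v)} (h : IsInitial A) : LocEmpty J A :=
  fun c s => PLift.down (ULift.down ((h.to (botTest J)).hom.app c s))

/-- Each sheaf has a unique section over an object covered by the empty sieve. -/
noncomputable def secB (B : Sheaf J (Type v)) {c : Cᵒᵖ}
    (hb : (⊥ : Sieve c.unop) ∈ J c.unop) : B.val.obj c :=
  ((isSheaf_iff_isSheaf_of_type _ _).1 B.cond ⊥ hb).amalgamate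
    (fun Y f hf => False.elim (by simpa using hf))
    (fun Y₁ Y₂ Z g₁ g₂ f₁ f₂ h₁ h₂ _ => False.elim (by simpa using h₁))

lemma secB_unique (B : Sheaf J (Type v)) {c : Cᵒᵖ}
    (hb : (⊥ : Sieve c.unop) ∈ J c.unop) (t : B.val.obj c) : t = secB J B hb := by
  apply ((isSheaf_iff_isSheaf_of_type _ _).1 B.cond ⊥ hb).isSeparatedFor.ext
  intro Y f hf
  exact False.elim (by simpa using hf)

noncomputable def isInitial_of_locEmpty {A : Sheaf J (Type v)} (h : LocEmpty J A) :
    IsInitial A :=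
  IsInitial.ofUniqueHom
    (fun B => ⟨{ app := fun c => TypeCat.ofHom fun s => secB J B (h c s)
                 naturality := fun c c' f => ConcreteCategory.hom_ext _ _ fun s => by
                   rw [types_comp_apply, types_comp_apply]
                   exact ((secB_unique J B (h c' (A.val.map f s)) _).trans
                     (secB_unique J B (h c' (A.val.map f s)) _).symm) }⟩)
    (fun B m => by
      ext c s
      exact secB_unique J B (h c s) _)


/-- Sections of a sheaf correspond to maps from the sheafified representable. -/
noncomputable def hatEquiv (P : Sheaf J (Type v)) (d : C) :
    P.val.obj (op d) ≃ ((presheafToSheaf J (Type v)).obj (yoneda.obj d) ⟶ P) :=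
  (yonedaEquiv (C := C) (X := d) (F := P.val)).symm.trans
    ((sheafificationAdjunction J (Type v)).homEquiv (yoneda.obj d) P).symm

/-- The map from the sheafified representable associated to a section. -/
noncomputable def hat {P : Sheaf J (Type v)} {d : C} (s : P.val.obj (op d)) :
    (presheafToSheaf J (Type v)).obj (yoneda.obj d) ⟶ P :=
  hatEquiv J P d s

lemma hat_injective {P : Sheaf J (Type v)} {d : C} {s t : P.val.obj (op d)}
    (h : hat J s = hat J t) : s = t :=
  (hatEquiv J P d).injective h

lemma hat_comp {P Q : Sheaf J (Type v)} {d : C} (s : P.val.obj (op d)) (t : P ⟶ Q) :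
    hat J s ≫ t = hat J (t.hom.app (op d) s) := by
  dsimp [hat, hatEquiv]
  rw [← yonedaEquiv_symm_naturality_right]
  exact (Adjunction.homEquiv_naturality_right_symm _ _ _).symm


lemma mono_iff_injective_app {P Q : Sheaf J (Type v)} (f : P ⟶ Q) :
    Mono f ↔ ∀ c, Function.Injective (f.hom.app c) := by
  rw [Sheaf.Hom.mono_iff_presheaf_mono, NatTrans.mono_iff_mono_app]
  exact forall_congr' fun c => mono_iff_injective _

lemma sections_ext (P : Sheaf J (Type v)) {d : C} {S : Sieve d} (hS : S ∈ J d)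
    {t₁ t₂ : P.val.obj (op d)}
    (h : ∀ ⦃e : C⦄ (f : e ⟶ d), S f → P.val.map f.op t₁ = P.val.map f.op t₂) : t₁ = t₂ :=
  ((isSheaf_iff_isSheaf_of_type _ _).1 P.cond S hS).isSeparatedFor.ext h

/-- The canonical section of the sheafified representable. -/
noncomputable def unitSec (d : C) :
    ((presheafToSheaf J (Type v)).obj (yoneda.obj d)).val.obj (op d) :=
  ((sheafificationAdjunction J (Type v)).unit.app (yoneda.obj d)).app (op d) (𝟙 d)

variable {K : Type v} [SmallCategory K]

/-- The sieve of maps along which `x` lifts to some vertex of the diagram. -/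
def liftSieve (F : K ⥤ Sheaf J (Type v)) (c : Cocone F) {d : C}
    (x : c.pt.val.obj (op d)) : Sieve d where
  arrows e := { f | ∃ (p : K) (y : (F.obj p).val.obj (op e)),
    (c.ι.app p).hom.app (op e) y = c.pt.val.map f.op x }
  downward_closed := by
    rintro e e' f ⟨p, y, hy⟩ g
    refine ⟨p, (F.obj p).val.map g.op y, ?_⟩
    rw [FunctorToTypes.naturality, hy]
    exact (FunctorToTypes.map_comp_apply c.pt.val f.op g.op x).symm

lemma liftSieve_pullback (F : K ⥤ Sheaf J (Type v)) (c : Cocone F) {d : C}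
    (x : c.pt.val.obj (op d)) {e : C} (f : e ⟶ d) :
    (liftSieve J F c x).pullback f = liftSieve J F c (c.pt.val.map f.op x) := by
  ext e' g
  show (∃ p y, _ = c.pt.val.map (g ≫ f).op x) ↔ _
  rw [op_comp, FunctorToTypes.map_comp_apply]
  exact Iff.rfl

/-- The subsheaf of sections of the colimit that locally lift to the diagram. -/
def liftSubsheaf (F : K ⥤ Sheaf J (Type v)) (c : Cocone F) : Sheaf J (Type v) where
  obj :=
    { obj := fun e => { x : c.pt.val.obj e // liftSieve J F c x ∈ J e.unop }
      map := fun f => TypeCat.ofHom fun x => ⟨c.pt.val.map f x.1, by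
        have := J.pullback_stable f.unop x.2
        rwa [liftSieve_pullback] at this⟩
      map_id := fun e => ConcreteCategory.hom_ext _ _ fun x => Subtype.ext
        (by exact ConcreteCategory.congr_hom (c.pt.val.map_id e) x.1)
      map_comp := fun f g => ConcreteCategory.hom_ext _ _ fun x => Subtype.ext
        (by exact ConcreteCategory.congr_hom (c.pt.val.map_comp f g) x.1) }
  property := by
    rw [isSheaf_iff_isSheaf_of_type]
    intro d S hS fam hfam
    have hXsh := (isSheaf_iff_isSheaf_of_type _ _).1 c.pt.cond S hS
    let fam' : Presieve.FamilyOfElements c.pt.val S.arrows := fun e f hf => (fam f hf).1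
    have hcomp : fam'.Compatible := by
      intro e₁ e₂ e g₁ g₂ f₁ f₂ h₁ h₂ hgf
      exact congrArg Subtype.val (hfam g₁ g₂ h₁ h₂ hgf)
    have hmem : liftSieve J F c (hXsh.amalgamate fam' hcomp) ∈ J d := by
      refine J.transitive hS _ fun e f hf => ?_
      rw [liftSieve_pullback, hXsh.valid_glue hcomp f hf]
      exact (fam f hf).2
    refine ⟨⟨hXsh.amalgamate fam' hcomp, hmem⟩, ?_, ?_⟩
    · intro e f hf
      exact Subtype.ext (hXsh.valid_glue hcomp f hf)
    · intro y hy
      apply Subtype.ext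
      apply hXsh.isSeparatedFor.ext
      intro e f hf
      exact (congrArg Subtype.val (hy f hf)).trans (hXsh.valid_glue hcomp f hf).symm

/-- Every section of a colimit of sheaves locally lifts to the diagram. -/
lemma liftSieve_mem (F : K ⥤ Sheaf J (Type v)) (c : Cocone F) (hc : IsColimit c)
    {d : C} (x : c.pt.val.obj (op d)) : liftSieve J F c x ∈ J d := by
  let G := liftSubsheaf J F c
  let φ : ∀ p : K, F.obj p ⟶ G := fun p =>
    ⟨{ app := fun e => TypeCat.ofHom fun y => ⟨(c.ι.app p).hom.app e y, by
          refine J.superset_covering ?_ (J.top_mem e.unop)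
          intro e' g _
          exact ⟨p, (F.obj p).val.map g.op y,
            NatTrans.naturality_apply (c.ι.app p).hom g.op y⟩⟩
       naturality := fun e e' g => ConcreteCategory.hom_ext _ _ fun y => Subtype.ext
          (NatTrans.naturality_apply (c.ι.app p).hom g y) }⟩
  have hcoc : ∀ {p q : K} (m : p ⟶ q), F.map m ≫ φ q = φ p := by
    intro p q m
    apply Sheaf.hom_ext
    apply NatTrans.ext
    funext e
    ext y
    exact Subtype.ext (congrArg (fun (t : F.obj p ⟶ c.pt) => t.hom.app e y) (c.w m))
  let ψ : Cocone F :=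
    { pt := G
      ι := { app := φ
             naturality := fun p q m => by
               rw [hcoc m]
               exact (Category.comp_id _).symm } }
  let inc : G ⟶ c.pt := ⟨{ app := fun e => TypeCat.ofHom Subtype.val, naturality := fun _ _ _ => rfl }⟩
  have hri : hc.desc ψ ≫ inc = 𝟙 c.pt := by
    refine hc.hom_ext fun p => ?_
    rw [← Category.assoc, hc.fac ψ p]
    show φ p ≫ inc = c.ι.app p ≫ 𝟙 c.pt
    apply Sheaf.hom_ext
    apply NatTrans.ext
    funext e
    ext y
    rfl
  have h2 := ((hc.desc ψ).hom.app (op d) x).2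
  have h1 : ((hc.desc ψ).hom.app (op d) x).1 = x :=
    by have := ConcreteCategory.congr_hom (congrArg (fun (t : c.pt ⟶ c.pt) => t.hom.app (op d)) hri) x; exact this
  rwa [h1] at h2

end ComplementAux

open ComplementAux

/-- In a (Grothendieck) topos `E = Sheaf J (Type _)`, given maps `Z → X ← U` and a
presentation of `X` as a colimit of a small diagram `F : K ⥤ E`, the map `j : U ⟶ X` is a
complement of `i : Z ⟶ X` if and only if for every `p : K` the base change of `j` along
`F.obj p ⟶ X` is a complement of the base change of `i` along `F.obj p ⟶ X`. -/
theorem isComplement_iff_locally_on_colimit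
    {C : Type v} [SmallCategory C] (J : GrothendieckTopology C)
    {K : Type v} [SmallCategory K] (F : K ⥤ Sheaf J (Type v))
    (c : Cocone F) (hc : IsColimit c)
    {Z U : Sheaf J (Type v)} (i : Z ⟶ c.pt) (j : U ⟶ c.pt) :
    IsComplementOf i j ↔
      ∀ p : K,
        IsComplementOf (pullback.snd i (c.ι.app p)) (pullback.snd j (c.ι.app p)) := by

  constructor
  · rintro ⟨hm, hd, hu⟩ p
    haveI := hm
    refine ⟨inferInstance, ?_, ?_⟩
    · intro A a b hab
      refine hd A (a ≫ pullback.fst i (c.ι.app p)) (b ≫ pullback.fst j (c.ι.app p)) ?_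
      rw [Category.assoc, Category.assoc, pullback.condition, pullback.condition,
        ← Category.assoc, hab, Category.assoc]
    · intro V v hv
      have hdis : AreDisjoint i (v ≫ c.ι.app p) := by
        intro A a b hab
        refine hv A (pullback.lift a (b ≫ v) ?_) b ?_
        · rw [← Category.assoc] at hab; exact hab
        · rw [pullback.lift_snd]
      obtain ⟨k, hk⟩ := hu V (v ≫ c.ι.app p) hdis
      exact ⟨pullback.lift k v hk, pullback.lift_snd _ _ _⟩
  · intro h
    have hmono : Mono j := by
      rw [mono_iff_injective_app]
      intro e u u' huu
      refine sections_ext J U (liftSieve_mem J F c hc (j.hom.app e u)) ?_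
      intro e' f hf
      obtain ⟨p, y, hy⟩ := hf
      have hw : hat J (U.val.map f.op u) ≫ j = hat J y ≫ c.ι.app p := by
        rw [hat_comp, hat_comp]
        congr 1
        rw [hy]
        exact NatTrans.naturality_apply j.hom f.op u
      have hw' : hat J (U.val.map f.op u') ≫ j = hat J y ≫ c.ι.app p := by
        rw [hat_comp, hat_comp]
        congr 1
        rw [hy, huu]
        exact NatTrans.naturality_apply j.hom f.op u'
      haveI := (h p).1
      have hww : pullback.lift _ _ hw = pullback.lift _ _ hw' := by
        rw [← cancel_mono (pullback.snd j (c.ι.app p))]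
        rw [pullback.lift_snd, pullback.lift_snd]
      have hfst := congrArg (fun t => t ≫ pullback.fst j (c.ι.app p)) hww
      simp only [pullback.lift_fst] at hfst
      exact hat_injective J hfst
    have hdisj : AreDisjoint i j := by
      intro A a b hab
      refine ⟨isInitial_of_locEmpty J ?_⟩
      intro e s
      refine J.transitive (liftSieve_mem J F c hc ((a ≫ i).hom.app e s)) ⊥ ?_
      intro e' f hf
      rw [bot_pullback]
      obtain ⟨p, y, hy⟩ := hf
      have h₁ : (hat J (A.val.map f.op s) ≫ a) ≫ i = hat J y ≫ c.ι.app p := by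
        rw [Category.assoc, hat_comp, hat_comp, hy]
        congr 1
        exact NatTrans.naturality_apply (a ≫ i).hom f.op s
      have h₂ : (hat J (A.val.map f.op s) ≫ b) ≫ j = hat J y ≫ c.ι.app p := by
        rw [Category.assoc, ← hab, ← Category.assoc]
        exact h₁
      obtain ⟨hinit⟩ := (h p).2.1 _ (pullback.lift _ _ h₁) (pullback.lift _ _ h₂)
        (by rw [pullback.lift_snd, pullback.lift_snd])
      exact locEmpty_of_isInitial J hinit (op e') (unitSec J e')
    have hinj := (mono_iff_injective_app J j).1 hmono
    refine ⟨hmono, hdisj, ?_⟩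
    intro V v hv
    have key : ∀ (e : Cᵒᵖ) (s : V.val.obj e), ∃ t : U.val.obj e,
        j.hom.app e t = v.hom.app e s := by
      intro e s
      have loc : ∀ ⦃e' : C⦄ (f : e' ⟶ e.unop),
          (liftSieve J F c (v.hom.app e s)).arrows f →
          ∃ t : U.val.obj (op e'),
            j.hom.app (op e') t = c.pt.val.map f.op (v.hom.app e s) := by
        intro e' f hf
        obtain ⟨p, y, hy⟩ := hf
        have hdis : AreDisjoint (pullback.snd i (c.ι.app p)) (hat J y) := by
          intro A a b hab
          refine hv A (a ≫ pullback.fst i (c.ι.app p)) (b ≫ hat J (V.val.map f.op s)) ?_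
          have hsec : v.hom.app (op e') (V.val.map f.op s)
              = (c.ι.app p).hom.app (op e') y := by
            rw [hy]; exact NatTrans.naturality_apply v.hom f.op s
          rw [Category.assoc, Category.assoc, pullback.condition, hat_comp, hsec,
            ← hat_comp, ← Category.assoc, ← Category.assoc, hab]
        obtain ⟨m, hm'⟩ := (h p).2.2 _ (hat J y) hdis
        refine ⟨(hatEquiv J U e').symm (m ≫ pullback.fst j (c.ι.app p)), ?_⟩
        apply hat_injective J
        rw [← hat_comp]
        have heq : hat J ((hatEquiv J U e').symm (m ≫ pullback.fst j (c.ι.app p)))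
            = m ≫ pullback.fst j (c.ι.app p) := (hatEquiv J U e').apply_symm_apply _
        rw [heq, Category.assoc, pullback.condition, ← Category.assoc, hm', hat_comp, hy]
      choose t ht using loc
      have hUsh := (isSheaf_iff_isSheaf_of_type _ _).1 U.cond _
        (liftSieve_mem J F c hc (v.hom.app e s))
      have hcomp : Presieve.FamilyOfElements.Compatible
          (fun e' f hf => t f hf :
            Presieve.FamilyOfElements U.val (liftSieve J F c (v.hom.app e s)).arrows) := by
        intro e₁ e₂ e₀ g₁ g₂ f₁ f₂ h₁ h₂ hgf
        dsimp only
        apply hinj (op e₀)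
        rw [NatTrans.naturality_apply j.hom g₁.op, NatTrans.naturality_apply j.hom g₂.op,
          ht f₁ h₁, ht f₂ h₂, ← FunctorToTypes.map_comp_apply, ← FunctorToTypes.map_comp_apply,
          ← op_comp, ← op_comp, hgf]
      obtain ⟨tt, htt, -⟩ := hUsh (fun e' f hf => t f hf) hcomp
      refine ⟨tt, ?_⟩
      refine sections_ext J c.pt (liftSieve_mem J F c hc (v.hom.app e s)) ?_
      intro e' f hf
      rw [← NatTrans.naturality_apply j.hom f.op tt, htt f hf]
      exact ht f hf
    choose κ hκ using key
    refine ⟨⟨{ app := fun e => TypeCat.ofHom (κ e), naturality := ?_ }⟩, ?_⟩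
    · intro e e' f
      ext s
      apply hinj e'
      show j.hom.app e' (κ e' (V.val.map f s)) = j.hom.app e' (U.val.map f (κ e s))
      rw [hκ e' (V.val.map f s), NatTrans.naturality_apply j.hom f (κ e s), hκ e s]
      exact NatTrans.naturality_apply v.hom f s
    · apply Sheaf.hom_ext
      apply NatTrans.ext
      funext e
      ext s
      exact hκ e s
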